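/- For all natural numbers n, i, j with n ≥ 1: T_{n+i}·T_{n+j} − T_{n−1}·T_{n+1+i+j} = (1−x²)·U_i·U_j, as an identity of polynomials. -/

import Mathlib

open Polynomial Polynomial.Chebyshev

theorem chebyshev_vajda_aux (R : Type*) [CommRing R] (m k : ℤ) :
    2 * ((1 - X ^ 2) * U R m * U R k) = T R (m - k) - T R (m + k + 2) := by
  induction k using Polynomial.Chebyshev.induct with
  | zero =>
    have h := one_sub_X_sq_mul_U_eq_pol_in_T R m
    have h2 := T_add_two R m
    simp only [U_zero, mul_one, sub_zero, add_zero]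
    linear_combination (norm := ring_nf) 2 * h - h2
  | one =>
    have h := one_sub_X_sq_mul_U_eq_pol_in_T R m
    have h1 := T_add_two R (m + 1)
    have h2 := T_add_two R m
    have h3 := T_add_two R (m - 1)
    simp only [U_one]
    linear_combination (norm := ring_nf) 4 * (X : R[X]) * h + h1 - 2 * (X : R[X]) * h2 - h3
  | add_two k ih1 ih2 =>
    have hU := U_add_two R k
    have ha := T_add_two R (m - k - 2)
    have hb := T_add_two R (m + k + 2)
    linear_combination (norm := ring_nf)
      2 * ((1 - (X : R[X]) ^ 2) * U R m) * hU + 2 * (X : R[X]) * ih1 - ih2 - ha + hb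
  | neg_add_one k ih1 ih2 =>
    have hU := U_add_two R (-k - 1)
    have ha := T_add_two R (m + k - 1)
    have hb := T_add_two R (m - k + 1)
    linear_combination (norm := ring_nf)
      2 * ((1 - (X : R[X]) ^ 2) * U R m) * hU + 2 * (X : R[X]) * ih1 - ih2 - ha + hb

theorem chebyshev_T_vajda (R : Type*) [CommRing R] (n i j : ℕ) (hn : 1 ≤ n) :
    T R ((n : ℤ) + i) * T R ((n : ℤ) + j) - T R ((n : ℤ) - 1) * T R ((n : ℤ) + 1 + i + j) =
      (1 - X ^ 2) * U R (i : ℤ) * U R (j : ℤ) := by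
  have key : T ℤ ((n : ℤ) + i) * T ℤ ((n : ℤ) + j) - T ℤ ((n : ℤ) - 1) * T ℤ ((n : ℤ) + 1 + i + j)
      = (1 - X ^ 2) * U ℤ (i : ℤ) * U ℤ (j : ℤ) := by
    apply mul_left_cancel₀ (two_ne_zero : (2 : ℤ[X]) ≠ 0)
    have h1 := T_mul_T ℤ ((n : ℤ) + i) ((n : ℤ) + j)
    have h2 := T_mul_T ℤ ((n : ℤ) - 1) ((n : ℤ) + 1 + i + j)
    have h3 := chebyshev_vajda_aux ℤ (i : ℤ) (j : ℤ)
    have h4 : T ℤ ((n : ℤ) - 1 - ((n : ℤ) + 1 + i + j)) = T ℤ ((i : ℤ) + j + 2) := by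
      rw [show (n : ℤ) - 1 - ((n : ℤ) + 1 + i + j) = -((i : ℤ) + j + 2) by ring, T_neg]
    have h5 : T ℤ ((n : ℤ) + i + ((n : ℤ) + j)) = T ℤ ((n : ℤ) - 1 + ((n : ℤ) + 1 + i + j)) := by
      ring_nf
    linear_combination (norm := ring_nf) h1 - h2 - h3 - h4 + h5
  have := congrArg (Polynomial.map (Int.castRingHom R)) key
  simpa using this
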